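/- Let K be a field, L a finite-dimensional Galois field extension of K, ι a finite index type, b : ι → L a K-basis of L, and b' : ι → L a trace-dual family, i.e. Tr_{L/K}(b(i) · b'(j)) = 1 if i = j and 0 otherwise. Equip L ⊗_K L with the K-bilinear multiplication m determined by m(x ⊗ y, x' ⊗ y') = Tr_{L/K}(y · x') • (x ⊗ y'). For σ ∈ Gal(L/K) set u_σ := Σ_{i ∈ ι} σ(b(i)) ⊗ b'(i). Then u_{id} = Σ_i b(i) ⊗ b'(i) is the unit of m and m(u_σ, u_τ) = u_{σ∘τ} for all σ, τ ∈ Gal(L/K); in particular every u_σ is invertible for m, so σ ↦ u_σ is a group homomorphism from Gal(L/K) to the group of units of (L ⊗_K L, m). -/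

import Mathlib

/-!
The group homomorphism Gal(L/K) → (L ⊗_K L)ˣ given by σ ↦ Σᵢ σ(bᵢ) ⊗ b'ᵢ,
where L ⊗_K L carries the trace-twisted multiplication.
-/

open scoped BigOperators TensorProduct

/-- Expansion in the basis `b` with trace coefficients against `b'`. -/
theorem trace_dual_expand_left
    (K L : Type*) [Field K] [Field L] [Algebra K L] [FiniteDimensional K L]
    [IsGalois K L] (ι : Type*) [Fintype ι] [DecidableEq ι]
    (b : Module.Basis ι K L) (b' : ι → L)
    (hb' : ∀ i j : ι, Algebra.trace K L (b i * b' j) = if i = j then 1 else 0)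
    (x : L) : ∑ i : ι, Algebra.trace K L (x * b' i) • b i = x := by
  have h : (∑ i : ι, ((Algebra.trace K L).comp
      (LinearMap.mulRight K (b' i))).smulRight (b i)) = LinearMap.id (R := K) (M := L) := by
    apply b.ext
    intro j
    simp only [LinearMap.sum_apply, LinearMap.smulRight_apply, LinearMap.comp_apply,
      LinearMap.mulRight_apply, LinearMap.id_apply, hb']
    simp
  simpa using congrFun (congrArg (fun f => f.toFun) h) x

/-- Expansion in `b'` with trace coefficients against `b`. -/
theorem trace_dual_expand_right
    (K L : Type*) [Field K] [Field L] [Algebra K L] [FiniteDimensional K L]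
    [IsGalois K L] (ι : Type*) [Fintype ι] [DecidableEq ι]
    (b : Module.Basis ι K L) (b' : ι → L)
    (hb' : ∀ i j : ι, Algebra.trace K L (b i * b' j) = if i = j then 1 else 0)
    (y : L) : ∑ i : ι, Algebra.trace K L (y * b i) • b' i = y := by
  have nd := traceForm_nondegenerate K L
  set g := ∑ i : ι, Algebra.trace K L (y * b i) • b' i with hg
  have key : ∀ w : L, Algebra.trace K L ((g - y) * w) = 0 := by
    intro w
    have hw : ∀ j, Algebra.trace K L ((g - y) * b j) = 0 := by
      intro j
      rw [sub_mul, map_sub, hg, Finset.sum_mul, map_sum]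
      simp only [smul_mul_assoc, map_smul]
      have : ∀ i, Algebra.trace K L (b' i * b j) = if j = i then 1 else 0 := by
        intro i; rw [mul_comm, hb']
      simp [this, mul_comm]
    have := b.sum_repr w
    rw [← this, Finset.mul_sum, map_sum]
    simp only [mul_smul_comm, map_smul, hw, smul_zero, Finset.sum_const_zero]
  have h0 : g - y = 0 := nd.1 (g - y)
    (fun w => by rw [Algebra.traceForm_apply]; exact key w)
  exact sub_eq_zero.mp h0

/-- Let `L/K` be a finite Galois extension, `b : ι → L` a
`K`-basis and `b' : ι → L` a trace-dual family, and let `m` be the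
trace-twisted multiplication on `L ⊗_K L`.  For `σ ∈ Gal(L/K)` set
`u σ := ∑ i, σ (b i) ⊗ b' i`.  Then `u 1 = ∑ i, b i ⊗ b' i` is the unit of
`m`, `m (u σ) (u τ) = u (σ ∘ τ)`, and every `u σ` is invertible for `m`; in
particular `σ ↦ u σ` is a group homomorphism into the units of
`(L ⊗_K L, m)`. -/
theorem galois_to_units_of_tensor
    (K L : Type*) [Field K] [Field L] [Algebra K L] [FiniteDimensional K L]
    [IsGalois K L] (ι : Type*) [Fintype ι] [DecidableEq ι]
    (b : Module.Basis ι K L) (b' : ι → L)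
    (hb' : ∀ i j : ι, Algebra.trace K L (b i * b' j) = if i = j then 1 else 0)
    (m : L ⊗[K] L →ₗ[K] L ⊗[K] L →ₗ[K] L ⊗[K] L)
    (hm : ∀ x y x' y' : L,
      m (x ⊗ₜ[K] y) (x' ⊗ₜ[K] y') = Algebra.trace K L (y * x') • (x ⊗ₜ[K] y'))
    (u : (L ≃ₐ[K] L) → L ⊗[K] L)
    (hu : ∀ σ : L ≃ₐ[K] L, u σ = ∑ i : ι, σ (b i) ⊗ₜ[K] b' i) :
    (u 1 = ∑ i : ι, b i ⊗ₜ[K] b' i) ∧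
    (∀ z : L ⊗[K] L, m (u 1) z = z) ∧
    (∀ z : L ⊗[K] L, m z (u 1) = z) ∧
    (∀ σ τ : L ≃ₐ[K] L, m (u σ) (u τ) = u (σ * τ)) ∧
    (∀ σ : L ≃ₐ[K] L, m (u σ) (u σ⁻¹) = u 1 ∧ m (u σ⁻¹) (u σ) = u 1) := by
  have hu1 : u 1 = ∑ i : ι, b i ⊗ₜ[K] b' i := by
    rw [hu]; simp [AlgEquiv.one_apply]
  have hleft : ∀ z : L ⊗[K] L, m (u 1) z = z := by
    intro z
    induction z using TensorProduct.induction_on with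
    | zero => simp
    | tmul x y =>
      rw [hu1, map_sum, LinearMap.sum_apply]
      simp only [hm]
      have : ∑ i : ι, Algebra.trace K L (b' i * x) • (b i ⊗ₜ[K] y)
          = (∑ i : ι, Algebra.trace K L (x * b' i) • b i) ⊗ₜ[K] y := by
        rw [TensorProduct.sum_tmul]
        exact Finset.sum_congr rfl fun i _ => by
          rw [mul_comm, TensorProduct.smul_tmul']
      rw [this, trace_dual_expand_left K L ι b b' hb']
    | add z₁ z₂ h₁ h₂ => rw [map_add, h₁, h₂]
  have hright : ∀ z : L ⊗[K] L, m z (u 1) = z := by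
    intro z
    induction z using TensorProduct.induction_on with
    | zero => simp
    | tmul x y =>
      rw [hu1, map_sum]
      simp only [hm]
      have : ∑ i : ι, Algebra.trace K L (y * b i) • (x ⊗ₜ[K] b' i)
          = x ⊗ₜ[K] (∑ i : ι, Algebra.trace K L (y * b i) • b' i) := by
        rw [TensorProduct.tmul_sum]
        exact Finset.sum_congr rfl fun i _ => by rw [TensorProduct.tmul_smul]
      rw [this, trace_dual_expand_right K L ι b b' hb']
    | add z₁ z₂ h₁ h₂ => rw [map_add, LinearMap.add_apply, h₁, h₂]
  have hmul : ∀ σ τ : L ≃ₐ[K] L, m (u σ) (u τ) = u (σ * τ) := by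
    intro σ τ
    rw [hu σ, hu τ, hu (σ * τ)]
    simp only [map_sum, LinearMap.sum_apply, hm]
    refine Finset.sum_congr rfl fun j _ => ?_
    have h1 : ∑ i : ι, Algebra.trace K L (b' i * τ (b j)) • (σ (b i) ⊗ₜ[K] b' j)
        = (∑ i : ι, Algebra.trace K L (τ (b j) * b' i) • σ (b i)) ⊗ₜ[K] b' j := by
      rw [TensorProduct.sum_tmul]
      exact Finset.sum_congr rfl fun i _ => by
        rw [mul_comm, TensorProduct.smul_tmul']
    rw [h1]
    have h2 : ∑ i : ι, Algebra.trace K L (τ (b j) * b' i) • σ (b i)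
        = σ (τ (b j)) := by
      have := trace_dual_expand_left K L ι b b' hb' (τ (b j))
      calc ∑ i : ι, Algebra.trace K L (τ (b j) * b' i) • σ (b i)
          = σ (∑ i : ι, Algebra.trace K L (τ (b j) * b' i) • b i) := by
            rw [map_sum]
            exact Finset.sum_congr rfl fun i _ => (map_smul σ _ _).symm
        _ = σ (τ (b j)) := by rw [this]
    rw [h2, AlgEquiv.mul_apply]
  refine ⟨hu1, hleft, hright, hmul, fun σ => ?_⟩
  constructor
  · rw [hmul, mul_inv_cancel]
  · rw [hmul, inv_mul_cancel]
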